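/- Let p1,…,p5 ∈ ℝ⁴ be affinely independent, let v = |det T| / 24 > 0 be the hypervolume of the pentatope with these vertices, and let a = (96·v/√5)^{1/4}. Then the quality heuristic η⁽³⁾ := 2 · (det A(R,T))^{1/4} / √(trace(A(R,T)·A(R,T)ᵀ)) — which equals the ratio of the geometric mean to the root-mean-square of the four eigenvalues of A(R,T) — satisfies η⁽³⁾ = 6 · 5^{3/4} · √(384·v / Θ), where Θ is the explicit polynomial in the squared edge lengths given in the context. -/

import Mathlib

open Real Matrix

set_option maxHeartbeats 4000000

/-- The edge-vector matrix of the regular pentatope with edge length `a`. -/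
noncomputable def regularPentatopeMatrix (a : ℝ) : Matrix (Fin 4) (Fin 4) ℝ :=
  !![a * Real.sqrt 3 / 2, a * Real.sqrt 3 / 2, a * Real.sqrt 3 / 3, a * Real.sqrt 3 / 3;
     -a / 2,              a / 2,               0,                   0;
     0,                   0,                   a * Real.sqrt 6 / 3, a * Real.sqrt 6 / 12;
     0,                   0,                   0,                   a * Real.sqrt 10 / 4]

/-- The edge-vector matrix of the pentatope with vertices `p 0, …, p 4`. -/
noncomputable def edgeMatrix (p : Fin 5 → EuclideanSpace ℝ (Fin 4)) :
    Matrix (Fin 4) (Fin 4) ℝ :=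
  Matrix.of fun (k : Fin 4) (i : Fin 4) => (p i.succ - p 0) k

/-- `A(R,T) = (R⁻¹)ᵀ · TᵀT · R⁻¹`. -/
noncomputable def shapeMatrix (a : ℝ) (p : Fin 5 → EuclideanSpace ℝ (Fin 4)) :
    Matrix (Fin 4) (Fin 4) ℝ :=
  ((regularPentatopeMatrix a)⁻¹)ᵀ * ((edgeMatrix p)ᵀ * edgeMatrix p) *
    (regularPentatopeMatrix a)⁻¹

/-- Squared Euclidean distance `d_{ij} = ‖p_j − p_i‖²`. -/
noncomputable def dsq (p : Fin 5 → EuclideanSpace ℝ (Fin 4)) (i j : Fin 5) : ℝ :=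
  ‖p j - p i‖ ^ 2

/-- The explicit polynomial `Θ` in the ten squared edge lengths. -/
def Theta (d12 d13 d14 d15 d23 d24 d25 d34 d35 d45 : ℝ) : ℝ :=
  600 * (d12 - d13) ^ 2 + 900 * d23 ^ 2 + 100 * (-2 * (d12 + d13) + d23) ^ 2 +
  75 * (d12 - d13 - 3 * d24 + 3 * d34) ^ 2 +
  25 * (d12 + d13 - 3 * d14 + d23 - 3 * (d24 + d34)) ^ 2 +
  25 * (d12 + d13 - 6 * d14 - 2 * d23 + 3 * (d24 + d34)) ^ 2 +
  45 * (d12 - d13 + d24 - 4 * d25 - d34 + 4 * d35) ^ 2 +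
  15 * (d12 + d13 + 2 * d14 - 8 * d15 - 2 * d23 - d24 + 4 * d25 - d34 + 4 * d35) ^ 2 +
  30 * (-d12 - d13 + d14 + 2 * d15 - d23 + d24 + 2 * d25 + d34 + 2 * d35 - 6 * d45) ^ 2 +
  9 * (d12 + d13 + d14 - 4 * d15 + d23 + d24 - 4 * d25 + d34 - 4 * (d35 + d45)) ^ 2

/-- Gram matrix of the regular pentatope edge matrix. -/
lemma pentagram (a : ℝ) :
    (regularPentatopeMatrix a)ᵀ * regularPentatopeMatrix a =
      !![a^2,(a^2)/2,a^2/2,a^2/2; a^2/2,a^2,a^2/2,a^2/2;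
         a^2/2,a^2/2,a^2,a^2/2; a^2/2,a^2/2,a^2/2,a^2] := by
  have h3 : Real.sqrt 3 ^ 2 = 3 := Real.sq_sqrt (by norm_num)
  have h6 : Real.sqrt 6 ^ 2 = 6 := Real.sq_sqrt (by norm_num)
  have h10 : Real.sqrt 10 ^ 2 = 10 := Real.sq_sqrt (by norm_num)
  ext i j
  fin_cases i <;> fin_cases j <;>
    simp [regularPentatopeMatrix, Matrix.mul_apply, Fin.sum_univ_four,
      Matrix.transpose_apply, Matrix.vecHead, Matrix.vecTail] <;>
    nlinarith [h3, h6, h10]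

lemma dsq_expand (p : Fin 5 → EuclideanSpace ℝ (Fin 4)) (i j : Fin 5) :
    dsq p i j = ∑ k : Fin 4, (p j k - p i k)^2 := by
  rw [dsq, EuclideanSpace.norm_eq, Real.sq_sqrt (by positivity)]
  simp [sq_abs]

lemma succ3 (h : (3:ℕ) < 4) : Fin.succ (⟨3, h⟩ : Fin 4) = 4 := rfl
lemma succ0' : Fin.succ (0 : Fin 4) = 1 := rfl
lemma succ1' : Fin.succ (1 : Fin 4) = 2 := rfl
lemma succ2' : Fin.succ (2 : Fin 4) = 3 := rfl
lemma succ3' : Fin.succ (3 : Fin 4) = 4 := rfl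

/-- Gram matrix of the edge matrix, in terms of squared distances. -/
lemma gramD (p : Fin 5 → EuclideanSpace ℝ (Fin 4)) :
    (edgeMatrix p)ᵀ * edgeMatrix p =
      !![dsq p 0 1, (dsq p 0 1 + dsq p 0 2 - dsq p 1 2)/2,
         (dsq p 0 1 + dsq p 0 3 - dsq p 1 3)/2, (dsq p 0 1 + dsq p 0 4 - dsq p 1 4)/2;
         (dsq p 0 1 + dsq p 0 2 - dsq p 1 2)/2, dsq p 0 2,
         (dsq p 0 2 + dsq p 0 3 - dsq p 2 3)/2, (dsq p 0 2 + dsq p 0 4 - dsq p 2 4)/2;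
         (dsq p 0 1 + dsq p 0 3 - dsq p 1 3)/2, (dsq p 0 2 + dsq p 0 3 - dsq p 2 3)/2,
         dsq p 0 3, (dsq p 0 3 + dsq p 0 4 - dsq p 3 4)/2;
         (dsq p 0 1 + dsq p 0 4 - dsq p 1 4)/2, (dsq p 0 2 + dsq p 0 4 - dsq p 2 4)/2,
         (dsq p 0 3 + dsq p 0 4 - dsq p 3 4)/2, dsq p 0 4] := by
  ext i j
  fin_cases i <;> fin_cases j <;>
    simp [edgeMatrix, Matrix.mul_apply, Fin.sum_univ_four, dsq_expand,
      Matrix.transpose_apply, Matrix.vecHead, Matrix.vecTail,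
      succ3, succ0', succ1', succ2', succ3'] <;>
    ring

/-- The key polynomial identity. -/
lemma bigring (d12 d13 d14 d15 d23 d24 d25 d34 d35 d45 : ℝ) :
    (!![d12, (d12 + d13 - d23)/2, (d12 + d14 - d24)/2, (d12 + d15 - d25)/2;
        (d12 + d13 - d23)/2, d13, (d13 + d14 - d34)/2, (d13 + d15 - d35)/2;
        (d12 + d14 - d24)/2, (d13 + d14 - d34)/2, d14, (d14 + d15 - d45)/2;
        (d12 + d15 - d25)/2, (d13 + d15 - d35)/2, (d14 + d15 - d45)/2, d15] *
      !![(4:ℝ),-1,-1,-1; -1,4,-1,-1; -1,-1,4,-1; -1,-1,-1,4] *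
      (!![d12, (d12 + d13 - d23)/2, (d12 + d14 - d24)/2, (d12 + d15 - d25)/2;
        (d12 + d13 - d23)/2, d13, (d13 + d14 - d34)/2, (d13 + d15 - d35)/2;
        (d12 + d14 - d24)/2, (d13 + d14 - d34)/2, d14, (d14 + d15 - d45)/2;
        (d12 + d15 - d25)/2, (d13 + d15 - d35)/2, (d14 + d15 - d45)/2, d15] *
      !![(4:ℝ),-1,-1,-1; -1,4,-1,-1; -1,-1,4,-1; -1,-1,-1,4])).trace =
    Theta d12 d13 d14 d15 d23 d24 d25 d34 d35 d45 / 144 := by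
  simp [Matrix.trace, Matrix.diag, Matrix.mul_apply, Fin.sum_univ_four, Theta,
    Matrix.vecHead, Matrix.vecTail]
  ring

theorem quality_heuristic_three (p : Fin 5 → EuclideanSpace ℝ (Fin 4))
    (hp : AffineIndependent ℝ p) (v a : ℝ)
    (hv : v = |(edgeMatrix p).det| / 24) (hvpos : 0 < v)
    (ha : a = (96 * v / Real.sqrt 5) ^ ((1 : ℝ) / 4)) :
    2 * (shapeMatrix a p).det ^ ((1 : ℝ) / 4) /
        Real.sqrt (((shapeMatrix a p) * (shapeMatrix a p)ᵀ).trace) =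
      6 * (5 : ℝ) ^ ((3 : ℝ) / 4) *
        Real.sqrt (384 * v /
          Theta (dsq p 0 1) (dsq p 0 2) (dsq p 0 3) (dsq p 0 4) (dsq p 1 2)
            (dsq p 1 3) (dsq p 1 4) (dsq p 2 3) (dsq p 2 4) (dsq p 3 4)) := by
  have hs0 : (0:ℝ) < Real.sqrt 5 := Real.sqrt_pos.mpr (by norm_num)
  set s : ℝ := Real.sqrt 5 with hsdef
  have hs : s^2 = 5 := Real.sq_sqrt (by norm_num)
  have hsne : s ≠ 0 := ne_of_gt hs0
  have hvne : v ≠ 0 := ne_of_gt hvpos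
  have hx : (0:ℝ) < 96 * v / s := by positivity
  have hapos : 0 < a := by rw [ha]; exact Real.rpow_pos_of_pos hx _
  have ha2ne : a^2 ≠ 0 := by positivity
  have ha4 : a^4 = 96 * v / s := by
    rw [ha, ← Real.rpow_natCast ((96 * v / s) ^ ((1:ℝ)/4)) 4,
      ← Real.rpow_mul hx.le]
    norm_num
  set N := regularPentatopeMatrix a with hNdef
  set T := edgeMatrix p with hTdef
  set K0 : Matrix (Fin 4) (Fin 4) ℝ :=
    !![(4:ℝ),-1,-1,-1; -1,4,-1,-1; -1,-1,4,-1; -1,-1,-1,4] with hK0def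
  set c : ℝ := 2 / (5 * a^2) with hcdef
  -- right inverse of the Gram matrix
  have hright : (Nᵀ * N) * (c • K0) = 1 := by
    rw [hNdef, pentagram a]
    ext i j
    fin_cases i <;> fin_cases j <;>
      simp [Matrix.mul_apply, Fin.sum_univ_four, Matrix.smul_apply, hK0def,
        Matrix.one_apply, Matrix.vecHead, Matrix.vecTail, hcdef] <;>
      field_simp <;> ring
  have hKinv : (Nᵀ * N)⁻¹ = c • K0 := Matrix.inv_eq_right_inv hright
  have hNN' : N⁻¹ * (N⁻¹)ᵀ = c • K0 := by
    rw [Matrix.transpose_nonsing_inv, ← Matrix.mul_inv_rev]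
    exact hKinv
  -- determinant of N
  have hdetNN : (Nᵀ * N).det = 5 * (a^2)^4 / 16 := by
    rw [hNdef, pentagram a]
    simp [Matrix.det_succ_row_zero, Fin.sum_univ_succ, Matrix.vecHead, Matrix.vecTail,
      Fin.succAbove, Fin.castSucc, Fin.succ, Fin.castAdd, Fin.castLE]
    ring
  have hdetN2 : N.det ^ 2 = 576 * v^2 := by
    have h1 : (Nᵀ * N).det = N.det ^ 2 := by
      rw [Matrix.det_mul, Matrix.det_transpose]; ring
    have h2 : N.det ^ 2 = 5 * ((96 * v / s))^2 / 16 := by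
      rw [← h1, hdetNN, show ((a^2)^4 : ℝ) = (a^4)^2 by ring, ha4]
    rw [h2]
    field_simp
    linear_combination (-9216) * hs
  have hNdetne : N.det ≠ 0 := by
    intro h
    rw [h] at hdetN2
    nlinarith
  have hdetT2 : T.det ^ 2 = 576 * v^2 := by
    have habs : |T.det| = 24 * v := by rw [hv]; ring
    calc T.det ^ 2 = |T.det| ^ 2 := (sq_abs _).symm
    _ = 576 * v^2 := by rw [habs]; ring
  -- determinant of the shape matrix is 1
  have hdetA : (shapeMatrix a p).det = 1 := by
    rw [shapeMatrix, Matrix.det_mul, Matrix.det_mul, Matrix.det_transpose,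
      Matrix.det_nonsing_inv, Matrix.det_mul, Matrix.det_transpose,
      Ring.inverse_eq_inv]
    rw [← hNdef, ← hTdef]
    field_simp
    linear_combination hdetT2 - hdetN2
  -- the trace
  set Θv : ℝ := Theta (dsq p 0 1) (dsq p 0 2) (dsq p 0 3) (dsq p 0 4) (dsq p 1 2)
      (dsq p 1 3) (dsq p 1 4) (dsq p 2 3) (dsq p 2 4) (dsq p 3 4) with hΘdef
  set M : Matrix (Fin 4) (Fin 4) ℝ := Tᵀ * T with hMdef
  have hsymm : (shapeMatrix a p)ᵀ = shapeMatrix a p := by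
    rw [shapeMatrix]
    simp [Matrix.transpose_mul, Matrix.transpose_transpose, Matrix.mul_assoc, ← hTdef]
  have htrace : ((shapeMatrix a p) * (shapeMatrix a p)ᵀ).trace
      = s / (600 * v) * (Θv / 144) := by
    rw [hsymm]
    have e0 : shapeMatrix a p = (N⁻¹)ᵀ * M * N⁻¹ := rfl
    have e1 : shapeMatrix a p * shapeMatrix a p
        = (N⁻¹)ᵀ * ((M * (c • K0) * M) * N⁻¹) := by
      rw [e0, ← hNN']
      simp only [Matrix.mul_assoc]
    have e2 : (shapeMatrix a p * shapeMatrix a p).trace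
        = ((M * (c • K0)) * (M * (c • K0))).trace := by
      rw [e1, Matrix.trace_mul_comm, Matrix.mul_assoc, hNN']
      simp only [Matrix.mul_assoc]
    rw [e2]
    have e3 : ((M * (c • K0)) * (M * (c • K0))).trace
        = c^2 * ((M * K0) * (M * K0)).trace := by
      simp only [Matrix.mul_smul, Matrix.smul_mul, smul_smul, Matrix.trace_smul,
        smul_eq_mul]
      ring
    rw [e3, hMdef, hTdef, gramD p, hK0def, bigring, ← hΘdef]
    have hc2 : c^2 = s / (600 * v) := by
      rw [hcdef, div_pow, show ((5 * a^2)^2 : ℝ) = 25 * (a^4) by ring, ha4]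
      field_simp
      ring
    rw [hc2]
  -- final computation
  rw [hdetA, Real.one_rpow, htrace]
  have hΘnonneg : 0 ≤ Θv := by rw [hΘdef, Theta]; positivity
  rcases eq_or_lt_of_le hΘnonneg with hΘ0 | hΘpos
  · rw [← hΘ0]
    simp
  · have hXpos : 0 < s / (600 * v) * (Θv / 144) := by positivity
    have hYnonneg : 0 ≤ 384 * v / Θv := by positivity
    have key : ∀ x y : ℝ, 0 ≤ x → 0 ≤ y → x^2 = y^2 → x = y := by
      intro x y hx hy h
      nlinarith [sq_nonneg (x - y), sq_nonneg (x + y)]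
    apply key _ _ (by positivity) (by positivity)
    have h54 : ((5:ℝ) ^ ((3:ℝ)/4))^2 = 5 * s := by
      rw [← Real.rpow_natCast ((5:ℝ) ^ ((3:ℝ)/4)) 2,
        ← Real.rpow_mul (by norm_num : (0:ℝ) ≤ 5)]
      rw [show ((3:ℝ)/4 * ((2:ℕ):ℝ)) = 1 + 1/2 by push_cast; ring]
      rw [Real.rpow_add (by norm_num : (0:ℝ) < 5), Real.rpow_one,
        ← Real.sqrt_eq_rpow]
    simp only [div_pow, mul_pow]
    rw [Real.sq_sqrt hXpos.le, Real.sq_sqrt hYnonneg, h54]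
    have hΘne : Θv ≠ 0 := ne_of_gt hΘpos
    field_simp
    linear_combination (-69120) * hs
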